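/- arXiv:1706.02048 — 2 statements merged into one kernel-verified Lean document; each statement's English description precedes it below -/
import Mathlib

section
/- Assume |G| ≥ |P_f(Q) × {0,1}| and F = ⋃_{n≥0} G^{G^n}, where P_f(Q) is the collection of finite subsets of Q. Let Γ be a maximal consistent set in SLKVF + EXT, Γ_K = {φ : Kφ ∈ Γ}, L the set of all maximal consistent sets Δ with Γ_K ⊆ Δ, M_Γ = {C^{+Γ} : C finite ⊆ Q} where C^{+Γ} = {d : Kf(C,d) ∈ Γ}, and g : M_Γ × {0,1} → G an injection. Define the model M on worlds W = L × M_Γ × {0,1} by U(⟨Δ,C,i⟩,p) = 1 iff p ∈ Δ, and V(⟨Δ,C,i⟩,d) = V_p(⟨C,i⟩,d), where V_p(⟨X,i⟩,d) = g(∅^{+Γ},0) if Kv(d) ∈ Γ, g(X,0) if d ∈ X and Kv(d) ∉ Γ, and g(X,i) if d ∉ X. Then for every world ⟨Δ,C,i⟩ ∈ W and every formula φ of LKVF: φ ∈ Δ if and only if M,⟨Δ,C,i⟩ ⊨ φ. -/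
open scoped Classical

/-! Single-agent language `LKVF` with operators `Kv`, `Kf` and `K`. -/

inductive Formula (P Q : Type) : Type where
  | top : Formula P Q
  | atom : P → Formula P Q
  | Kv : Q → Formula P Q
  | Kf : Finset Q → Q → Formula P Q
  | and : Formula P Q → Formula P Q → Formula P Q
  | not : Formula P Q → Formula P Q
  | K : Formula P Q → Formula P Q

namespace Formula

variable {P Q : Type}

/-- Material implication, defined from `and` and `not`. -/
def imp (φ ψ : Formula P Q) : Formula P Q := Formula.not (Formula.and φ (Formula.not ψ))

/-- Falsum. -/
def bot : Formula P Q := Formula.not Formula.top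

/-- Disjunction. -/
def or (φ ψ : Formula P Q) : Formula P Q :=
  Formula.not (Formula.and (Formula.not φ) (Formula.not ψ))

end Formula

variable {P Q G : Type}

/-- Finite conjunction of a list of formulas. -/
def conj : List (Formula P Q) → Formula P Q
  | [] => Formula.top
  | φ :: l => Formula.and φ (conj l)

/-- Finite disjunction of a list of formulas. -/
def disj : List (Formula P Q) → Formula P Q
  | [] => Formula.bot
  | φ :: l => Formula.or φ (disj l)

/-- `φ` is a propositional tautology: every Boolean valuation commuting with the
Boolean connectives makes it true. -/
def IsTaut (φ : Formula P Q) : Prop :=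
  ∀ v : Formula P Q → Bool,
    v Formula.top = true →
    (∀ α β, v (Formula.and α β) = (v α && v β)) →
    (∀ α, v (Formula.not α) = (! v α)) →
    v φ = true

section Axioms

variable (P Q : Type) [LinearOrder Q]

/-- `⋀_{d ∈ D} Kf(C,d)`. -/
def finConjKf (C D : Finset Q) : Formula P Q :=
  conj ((D.sort (· ≤ ·)).map fun d => Formula.Kf C d)

/-- `⋀_{c ∈ C} Kv(c)`. -/
def finConjKv (C : Finset Q) : Formula P Q :=
  conj ((C.sort (· ≤ ·)).map fun c => Formula.Kv c)

/-- The axioms of the base system `SLKVF`. -/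
inductive SLKVF : Formula P Q → Prop where
  | taut {φ : Formula P Q} : IsTaut φ → SLKVF φ
  | axK (φ ψ : Formula P Q) :
      SLKVF (Formula.imp (Formula.K (Formula.imp φ ψ))
        (Formula.imp (Formula.K φ) (Formula.K ψ)))
  | axT (φ : Formula P Q) : SLKVF (Formula.imp (Formula.K φ) φ)
  | ax4 (φ : Formula P Q) : SLKVF (Formula.imp (Formula.K φ) (Formula.K (Formula.K φ)))
  | ax5 (φ : Formula P Q) :
      SLKVF (Formula.imp (Formula.not (Formula.K φ)) (Formula.K (Formula.not (Formula.K φ))))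
  | kv4 (d : Q) : SLKVF (Formula.imp (Formula.Kv d) (Formula.K (Formula.Kv d)))
  | kv5 (d : Q) :
      SLKVF (Formula.imp (Formula.not (Formula.Kv d)) (Formula.K (Formula.not (Formula.Kv d))))
  | kf4 (C : Finset Q) (d : Q) :
      SLKVF (Formula.imp (Formula.Kf C d) (Formula.K (Formula.Kf C d)))
  | kf5 (C : Finset Q) (d : Q) :
      SLKVF (Formula.imp (Formula.not (Formula.Kf C d))
        (Formula.K (Formula.not (Formula.Kf C d))))
  | proj {C : Finset Q} {c : Q} : c ∈ C → SLKVF (Formula.Kf C c)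
  | tran (C D : Finset Q) (e : Q) :
      SLKVF (Formula.imp (Formula.and (finConjKf P Q C D) (Formula.Kf D e)) (Formula.Kf C e))
  | vf (C : Finset Q) (d : Q) :
      SLKVF (Formula.imp (Formula.and (finConjKv P Q C) (Formula.Kf C d)) (Formula.Kv d))

end Axioms

/-- Provability from an axiom set `Ax` with rules modus ponens and necessitation. -/
inductive Prov (Ax : Formula P Q → Prop) : Formula P Q → Prop where
  | ax {φ : Formula P Q} : Ax φ → Prov Ax φ
  | mp {φ ψ : Formula P Q} : Prov Ax (Formula.imp φ ψ) → Prov Ax φ → Prov Ax ψ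
  | nec {φ : Formula P Q} : Prov Ax φ → Prov Ax (Formula.K φ)

/-- `Γ` is consistent: no finite conjunction of its members proves `⊥`. -/
def Consistent (Ax : Formula P Q → Prop) (Γ : Set (Formula P Q)) : Prop :=
  ¬ ∃ L : List (Formula P Q), (∀ φ ∈ L, φ ∈ Γ) ∧ Prov Ax (Formula.imp (conj L) Formula.bot)

/-- `Γ` is maximal consistent. -/
def MCS (Ax : Formula P Q → Prop) (Γ : Set (Formula P Q)) : Prop :=
  Consistent Ax Γ ∧ ∀ φ : Formula P Q, φ ∈ Γ ∨ Formula.not φ ∈ Γ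

/-! Function domains: sets of finitary functions on the value domain `G`. -/

/-- A function domain on `G`: a set of `n`-ary functions on `G` for various `n`. -/
abbrev FnDom (G : Type) : Type := Set (Σ n : ℕ, (Fin n → G) → G)

/-- `F` contains all projection functions `id_{i,j}` for `0 < i ≤ j`. -/
def hasProjections (F : FnDom G) : Prop :=
  ∀ (j : ℕ) (k : Fin j), (⟨j, fun x => x k⟩ : Σ n : ℕ, (Fin n → G) → G) ∈ F

/-- `F` is closed under composition: for an `n`-ary `f ∈ F` with `n ≥ 1` and
`m`-ary `g₁, …, gₙ ∈ F`, the composition `f(g₁(·),…,gₙ(·))` is in `F`. -/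
def closedComp (F : FnDom G) : Prop :=
  ∀ (n m : ℕ), 0 < n → ∀ f : (Fin n → G) → G,
    (⟨n, f⟩ : Σ n : ℕ, (Fin n → G) → G) ∈ F →
    ∀ g : Fin n → (Fin m → G) → G,
      (∀ k, (⟨m, g k⟩ : Σ n : ℕ, (Fin n → G) → G) ∈ F) →
      (⟨m, fun x => f fun k => g k x⟩ : Σ n : ℕ, (Fin n → G) → G) ∈ F

/-- The tuple of values of the variables of the finite set `C`, in the fixed
(increasing) order of its elements. -/
def tupleV [LinearOrder Q] (v : Q → G) (C : Finset Q) : Fin C.card → G :=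
  fun k => v ((C.sort (· ≤ ·)).get (Fin.cast (Finset.length_sort (s := C) (· ≤ ·)).symm k))

/-- A model of `LKVF`: worlds, an assignment of propositional letters and an
assignment of values to variables. -/
structure Model (P Q G : Type) : Type 1 where
  W : Type
  U : W → P → Prop
  V : W → Q → G

variable [LinearOrder Q]

/-- Truth of a formula at a world of a model, relative to a function domain `F`. -/
def sat (F : FnDom G) (M : Model P Q G) (w : M.W) : Formula P Q → Prop
  | Formula.top => True
  | Formula.atom p => M.U w p
  | Formula.Kv d => ∃ x : G, ∀ w' : M.W, M.V w' d = x
  | Formula.Kf C d =>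
      ∃ f : (Fin C.card → G) → G,
        (⟨C.card, f⟩ : Σ n : ℕ, (Fin n → G) → G) ∈ F ∧
        ∀ w' : M.W, M.V w' d = f (tupleV (M.V w') C)
  | Formula.and φ ψ => sat F M w φ ∧ sat F M w ψ
  | Formula.not φ => ¬ sat F M w φ
  | Formula.K φ => ∀ w' : M.W, sat F M w' φ

/-- Validity over all models built on the value domain `G` and function domain `F`. -/
def Valid (F : FnDom G) (φ : Formula P Q) : Prop :=
  ∀ (M : Model P Q G) (w : M.W), sat F M w φ

/-! STATEMENT 6: truth lemma for the canonical model over the full function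
domain, built from a maximal consistent set `Γ` in `SLKVF + EXT`. -/

/-- The axiom system `SLKVF + EXT`. -/
def AxExt (P Q : Type) [LinearOrder Q] : Formula P Q → Prop := fun φ =>
  SLKVF P Q φ ∨ ∃ (d : Q) (C : Finset Q), φ = Formula.imp (Formula.Kv d) (Formula.Kf C d)

/-- `C^{+Γ} = {d : Kf(C,d) ∈ Γ}`. -/
def plusSet {P Q : Type} (Γ : Set (Formula P Q)) (C : Finset Q) : Set Q :=
  {d : Q | Formula.Kf C d ∈ Γ}

/-- `M_Γ`, the collection of all finitely generated closed sets. -/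
def MGamma {P Q : Type} (Γ : Set (Formula P Q)) : Set (Set Q) :=
  {X : Set Q | ∃ C : Finset Q, X = plusSet Γ C}

/-- The valuation `V_p`: `g(∅^{+Γ},0)` if `Kv(d) ∈ Γ`, `g(X,0)` if `d ∈ X` and
`Kv(d) ∉ Γ`, and `g(X,i)` if `d ∉ X`. -/
noncomputable def Vp {P Q G : Type} (Γ : Set (Formula P Q)) (g : Set Q → Bool → G)
    (X : Set Q) (i : Bool) (d : Q) : G :=
  if Formula.Kv d ∈ Γ then g (plusSet Γ (∅ : Finset Q)) false
  else if d ∈ X then g X false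
  else g X i

/-- `L`: the maximal consistent sets `Δ` with `Γ_K ⊆ Δ`. -/
abbrev LWorlds (P Q : Type) [LinearOrder Q] (Γ : Set (Formula P Q)) : Type :=
  {Δ : Set (Formula P Q) // MCS (AxExt P Q) Δ ∧ {φ : Formula P Q | Formula.K φ ∈ Γ} ⊆ Δ}

/-- The canonical model on `W = L × M_Γ × {0,1}`. -/
noncomputable def canonModel (P Q G : Type) [LinearOrder Q]
    (Γ : Set (Formula P Q)) (g : Set Q → Bool → G) : Model P Q G where
  W := LWorlds P Q Γ × {X : Set Q // X ∈ MGamma Γ} × Bool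
  U := fun w p => Formula.atom p ∈ w.1.1
  V := fun w d => Vp Γ g w.2.1.1 w.2.2 d

section Infra

variable {P Q : Type} [LinearOrder Q]

private lemma pt {φ : Formula P Q} (h : IsTaut φ) : Prov (AxExt P Q) φ :=
  Prov.ax (Or.inl (SLKVF.taut h))

private lemma prov_imp_trans {φ ψ χ : Formula P Q}
    (h1 : Prov (AxExt P Q) (φ.imp ψ)) (h2 : Prov (AxExt P Q) (ψ.imp χ)) :
    Prov (AxExt P Q) (φ.imp χ) := by
  refine Prov.mp (Prov.mp (pt ?_) h1) h2
  intro v hT hA hN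
  simp only [Formula.imp, hA, hN]
  cases v φ <;> cases v ψ <;> cases v χ <;> rfl

private lemma mcs_mem_of_prov {Δ : Set (Formula P Q)} (hΔ : MCS (AxExt P Q) Δ)
    {φ : Formula P Q} (hp : Prov (AxExt P Q) φ) : φ ∈ Δ := by
  rcases hΔ.2 φ with h | h
  · exact h
  · exfalso; apply hΔ.1
    refine ⟨[Formula.not φ], ?_, Prov.mp (pt ?_) hp⟩
    · intro x hx
      simp only [List.mem_cons, List.not_mem_nil, or_false] at hx
      subst hx; exact h
    · intro v hT hA hN
      simp only [conj, Formula.imp, Formula.bot, hA, hN, hT]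
      cases v φ <;> rfl

private lemma mcs_mem_imp2 {Δ : Set (Formula P Q)} (hΔ : MCS (AxExt P Q) Δ)
    {φ ψ χ : Formula P Q} (hp : Prov (AxExt P Q) (φ.imp (ψ.imp χ)))
    (h1 : φ ∈ Δ) (h2 : ψ ∈ Δ) : χ ∈ Δ := by
  rcases hΔ.2 χ with h | h
  · exact h
  · exfalso; apply hΔ.1
    refine ⟨[φ, ψ, Formula.not χ], ?_, Prov.mp (pt ?_) hp⟩
    · intro x hx
      simp only [List.mem_cons, List.not_mem_nil, or_false] at hx
      rcases hx with rfl | rfl | rfl <;> assumption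
    · intro v hT hA hN
      simp only [conj, Formula.imp, Formula.bot, hA, hN, hT]
      cases v φ <;> cases v ψ <;> cases v χ <;> rfl

private lemma mcs_mp {Δ : Set (Formula P Q)} (hΔ : MCS (AxExt P Q) Δ)
    {φ ψ : Formula P Q} (h1 : φ.imp ψ ∈ Δ) (h2 : φ ∈ Δ) : ψ ∈ Δ := by
  refine mcs_mem_imp2 hΔ (pt ?_) h1 h2
  intro v hT hA hN
  simp only [Formula.imp, hA, hN]
  cases v φ <;> cases v ψ <;> rfl

private lemma mcs_mem_imp {Δ : Set (Formula P Q)} (hΔ : MCS (AxExt P Q) Δ)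
    {φ ψ : Formula P Q} (hp : Prov (AxExt P Q) (φ.imp ψ)) (h1 : φ ∈ Δ) : ψ ∈ Δ :=
  mcs_mp hΔ (mcs_mem_of_prov hΔ hp) h1

private lemma mcs_not_iff {Δ : Set (Formula P Q)} (hΔ : MCS (AxExt P Q) Δ)
    {φ : Formula P Q} : Formula.not φ ∈ Δ ↔ φ ∉ Δ := by
  constructor
  · intro hn hp
    apply hΔ.1
    refine ⟨[φ, Formula.not φ], ?_, pt ?_⟩
    · intro x hx
      simp only [List.mem_cons, List.not_mem_nil, or_false] at hx
      rcases hx with rfl | rfl <;> assumption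
    · intro v hT hA hN
      simp only [conj, Formula.imp, Formula.bot, hA, hN, hT]
      cases v φ <;> rfl
  · intro h
    rcases hΔ.2 φ with h' | h'
    · exact absurd h' h
    · exact h'

private lemma mcs_and_iff {Δ : Set (Formula P Q)} (hΔ : MCS (AxExt P Q) Δ)
    {φ ψ : Formula P Q} : Formula.and φ ψ ∈ Δ ↔ φ ∈ Δ ∧ ψ ∈ Δ := by
  constructor
  · intro h
    constructor
    · refine mcs_mem_imp hΔ (pt ?_) h
      intro v hT hA hN
      simp only [Formula.imp, hA, hN]
      cases v φ <;> cases v ψ <;> rfl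
    · refine mcs_mem_imp hΔ (pt ?_) h
      intro v hT hA hN
      simp only [Formula.imp, hA, hN]
      cases v φ <;> cases v ψ <;> rfl
  · rintro ⟨h1, h2⟩
    refine mcs_mem_imp2 hΔ (pt ?_) h1 h2
    intro v hT hA hN
    simp only [Formula.imp, hA, hN]
    cases v φ <;> cases v ψ <;> rfl

private lemma mcs_conj_iff {Δ : Set (Formula P Q)} (hΔ : MCS (AxExt P Q) Δ)
    {L : List (Formula P Q)} : conj L ∈ Δ ↔ ∀ φ ∈ L, φ ∈ Δ := by
  induction L with
  | nil =>
    simp only [conj, List.not_mem_nil, false_implies, implies_true, iff_true]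
    refine mcs_mem_of_prov hΔ (pt ?_)
    intro v hT hA hN; exact hT
  | cons ψ l ih =>
    simp only [conj, mcs_and_iff hΔ, ih, List.mem_cons]
    constructor
    · rintro ⟨h1, h2⟩ x (rfl | hx)
      · exact h1
      · exact h2 x hx
    · intro h
      exact ⟨h ψ (Or.inl rfl), fun x hx => h x (Or.inr hx)⟩

private lemma prov_conj_imp_mem {L : List (Formula P Q)} {φ : Formula P Q}
    (h : φ ∈ L) : Prov (AxExt P Q) ((conj L).imp φ) := by
  induction L with
  | nil => exact absurd h List.not_mem_nil
  | cons ψ l ih =>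
    rcases List.mem_cons.1 h with rfl | h'
    · refine pt ?_
      intro v hT hA hN
      simp only [conj, Formula.imp, hA, hN]
      cases v φ <;> cases v (conj l) <;> rfl
    · refine Prov.mp (pt ?_) (ih h')
      intro v hT hA hN
      simp only [conj, Formula.imp, hA, hN]
      cases v ψ <;> cases v (conj l) <;> cases v φ <;> rfl

private lemma prov_imp_conj {L : List (Formula P Q)} {χ : Formula P Q}
    (h : ∀ ψ ∈ L, Prov (AxExt P Q) (χ.imp ψ)) : Prov (AxExt P Q) (χ.imp (conj L)) := by
  induction L with
  | nil =>
    refine pt ?_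
    intro v hT hA hN
    simp only [conj, Formula.imp, hA, hN, hT]
    cases v χ <;> rfl
  | cons ψ l ih =>
    have h1 := h ψ List.mem_cons_self
    have h2 := ih fun x hx => h x (List.mem_cons_of_mem ψ hx)
    refine Prov.mp (Prov.mp (pt ?_) h1) h2
    intro v hT hA hN
    simp only [conj, Formula.imp, hA, hN]
    cases v χ <;> cases v ψ <;> cases v (conj l) <;> rfl

private lemma prov_K_imp {φ ψ : Formula P Q}
    (h : Prov (AxExt P Q) (φ.imp ψ)) :
    Prov (AxExt P Q) ((Formula.K φ).imp (Formula.K ψ)) :=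
  Prov.mp (Prov.ax (Or.inl (SLKVF.axK φ ψ))) (Prov.nec h)

end Infra

section Infra2

variable {P Q : Type} [LinearOrder Q]

/-- From inconsistency of `Δ ∪ {φ}` extract a list in `Δ` proving `¬φ`. -/
private lemma incons_insert {Δ : Set (Formula P Q)} {φ : Formula P Q}
    (h : ¬ Consistent (AxExt P Q) (Δ ∪ {φ})) :
    ∃ L : List (Formula P Q), (∀ ψ ∈ L, ψ ∈ Δ) ∧
      Prov (AxExt P Q) ((conj L).imp (Formula.not φ)) := by
  rw [Consistent, not_not] at h
  obtain ⟨L₀, hL₀, hp⟩ := h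
  refine ⟨L₀.filter (fun ψ => decide (ψ ∈ Δ)), ?_, ?_⟩
  · intro x hx
    have := List.of_mem_filter hx
    simpa using this
  · set L := L₀.filter (fun ψ => decide (ψ ∈ Δ)) with hLdef
    have hstep : ∀ ψ ∈ L₀, Prov (AxExt P Q) ((Formula.and φ (conj L)).imp ψ) := by
      intro ψ hψ
      by_cases hmem : ψ ∈ Δ
      · have hψL : ψ ∈ L := by
          rw [hLdef]; exact List.mem_filter.2 ⟨hψ, by simpa using hmem⟩
        refine prov_imp_trans (ψ := conj L) ?_ (prov_conj_imp_mem hψL)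
        refine pt ?_
        intro v hT hA hN
        simp only [Formula.imp, hA, hN]
        cases v φ <;> cases v (conj L) <;> rfl
      · have : ψ = φ := by
          rcases hL₀ ψ hψ with h' | h'
          · exact absurd h' hmem
          · simpa using h'
        subst this
        refine pt ?_
        intro v hT hA hN
        simp only [Formula.imp, hA, hN]
        cases v ψ <;> cases v (conj L) <;> rfl
    have h2 : Prov (AxExt P Q) ((Formula.and φ (conj L)).imp (conj L₀)) :=
      prov_imp_conj hstep
    have h3 : Prov (AxExt P Q) ((Formula.and φ (conj L)).imp Formula.bot) :=
      prov_imp_trans h2 hp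
    refine Prov.mp (pt ?_) h3
    intro v hT hA hN
    simp only [Formula.imp, Formula.bot, hA, hN, hT]
    cases v φ <;> cases v (conj L) <;> rfl

private lemma cons_insert_or {Δ : Set (Formula P Q)} (hΔ : Consistent (AxExt P Q) Δ)
    (φ : Formula P Q) :
    Consistent (AxExt P Q) (Δ ∪ {φ}) ∨ Consistent (AxExt P Q) (Δ ∪ {Formula.not φ}) := by
  by_contra h
  push_neg at h
  obtain ⟨L1, hL1, hp1⟩ := incons_insert h.1
  obtain ⟨L2, hL2, hp2⟩ := incons_insert h.2
  apply hΔ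
  refine ⟨L1 ++ L2, ?_, ?_⟩
  · intro x hx
    rcases List.mem_append.1 hx with h' | h'
    · exact hL1 x h'
    · exact hL2 x h'
  have e1 : Prov (AxExt P Q) ((conj (L1 ++ L2)).imp (conj L1)) :=
    prov_imp_conj fun ψ hψ => prov_conj_imp_mem (List.mem_append_left _ hψ)
  have e2 : Prov (AxExt P Q) ((conj (L1 ++ L2)).imp (conj L2)) :=
    prov_imp_conj fun ψ hψ => prov_conj_imp_mem (List.mem_append_right _ hψ)
  have f1 := prov_imp_trans e1 hp1
  have f2 := prov_imp_trans e2 hp2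
  refine Prov.mp (Prov.mp (pt ?_) f1) f2
  intro v hT hA hN
  simp only [Formula.imp, Formula.bot, hA, hN, hT]
  cases v (conj (L1 ++ L2)) <;> cases v φ <;> rfl

/-- Lindenbaum's lemma. -/
private lemma lindenbaum {S : Set (Formula P Q)} (hS : Consistent (AxExt P Q) S) :
    ∃ Δ, MCS (AxExt P Q) Δ ∧ S ⊆ Δ := by
  have H : ∀ c ⊆ {T : Set (Formula P Q) | Consistent (AxExt P Q) T},
      IsChain (· ⊆ ·) c → c.Nonempty →
      ∃ ub ∈ {T : Set (Formula P Q) | Consistent (AxExt P Q) T}, ∀ s ∈ c, s ⊆ ub := by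
    intro c hc hchain hcne
    refine ⟨⋃₀ c, ?_, fun s hs => Set.subset_sUnion_of_mem hs⟩
    -- the union of a chain of consistent sets is consistent
    rintro ⟨L, hL, hp⟩
    -- find one member of the chain containing all of L
    have key : ∀ L' : List (Formula P Q), (∀ ψ ∈ L', ψ ∈ ⋃₀ c) →
        ∃ T ∈ c, ∀ ψ ∈ L', ψ ∈ T := by
      intro L'
      induction L' with
      | nil => intro _; exact ⟨hcne.choose, hcne.choose_spec, by simp⟩
      | cons ψ l ih =>
        intro hmem
        obtain ⟨T, hT, hTall⟩ := ih fun x hx => hmem x (List.mem_cons_of_mem ψ hx)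
        obtain ⟨T', hT', hψT'⟩ := hmem ψ List.mem_cons_self
        rcases eq_or_ne T T' with rfl | hne
        · exact ⟨T, hT, by
            intro x hx
            rcases List.mem_cons.1 hx with rfl | hx'
            · exact hψT'
            · exact hTall x hx'⟩
        rcases hchain hT hT' hne with hsub' | hsub'
        · exact ⟨T', hT', by
            intro x hx
            rcases List.mem_cons.1 hx with rfl | hx'
            · exact hψT'
            · exact hsub' (hTall x hx')⟩
        · exact ⟨T, hT, by
            intro x hx
            rcases List.mem_cons.1 hx with rfl | hx'
            · exact hsub' hψT'
            · exact hTall x hx'⟩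
    obtain ⟨T, hT, hTall⟩ := key L hL
    exact hc hT ⟨L, hTall, hp⟩
  obtain ⟨Δ, hsub, hmax⟩ := zorn_subset_nonempty
    {T : Set (Formula P Q) | Consistent (AxExt P Q) T} H S hS
  refine ⟨Δ, ⟨hmax.1, ?_⟩, hsub⟩
  intro φ
  rcases cons_insert_or hmax.1 φ with h | h
  · left
    have := hmax.2 (y := Δ ∪ {φ}) h Set.subset_union_left
    exact this (Set.mem_union_right _ rfl)
  · right
    have := hmax.2 (y := Δ ∪ {Formula.not φ}) h Set.subset_union_left
    exact this (Set.mem_union_right _ rfl)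

end Infra2

section Infra3

variable {P Q : Type} [LinearOrder Q]

private lemma mcs_K_conj {Γ : Set (Formula P Q)} (hΓ : MCS (AxExt P Q) Γ)
    {L : List (Formula P Q)} (h : ∀ ψ ∈ L, Formula.K ψ ∈ Γ) :
    Formula.K (conj L) ∈ Γ := by
  induction L with
  | nil => exact mcs_mem_of_prov hΓ (Prov.nec (pt fun v hT hA hN => hT))
  | cons ψ l ih =>
    have h1 : Formula.K ψ ∈ Γ := h ψ List.mem_cons_self
    have h2 := ih fun x hx => h x (List.mem_cons_of_mem ψ hx)
    have t1 : Prov (AxExt P Q) (ψ.imp ((conj l).imp (Formula.and ψ (conj l)))) := by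
      refine pt ?_
      intro v hT hA hN
      simp only [Formula.imp, hA, hN]
      cases v ψ <;> cases v (conj l) <;> rfl
    have t2 := prov_K_imp t1
    have t3 : Prov (AxExt P Q) ((Formula.K ((conj l).imp (Formula.and ψ (conj l)))).imp
        ((Formula.K (conj l)).imp (Formula.K (Formula.and ψ (conj l))))) :=
      Prov.ax (Or.inl (SLKVF.axK _ _))
    exact mcs_mem_imp2 hΓ (prov_imp_trans t2 t3) h1 h2

private lemma cons_GammaK_not {Γ : Set (Formula P Q)} (hΓ : MCS (AxExt P Q) Γ)
    {φ : Formula P Q} (h : Formula.K φ ∉ Γ) :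
    Consistent (AxExt P Q) ({ψ | Formula.K ψ ∈ Γ} ∪ {Formula.not φ}) := by
  intro hbad
  obtain ⟨L, hL, hp⟩ := incons_insert (Δ := {ψ | Formula.K ψ ∈ Γ})
    (φ := Formula.not φ) (not_not.mpr hbad)
  have hp' : Prov (AxExt P Q) ((conj L).imp φ) := by
    refine prov_imp_trans hp (pt ?_)
    intro v hT hA hN
    simp only [Formula.imp, hA, hN]
    cases v φ <;> rfl
  have hK : Prov (AxExt P Q) ((Formula.K (conj L)).imp (Formula.K φ)) := prov_K_imp hp'
  have hKc : Formula.K (conj L) ∈ Γ := mcs_K_conj hΓ hL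
  exact h (mcs_mem_imp hΓ hK hKc)

private lemma mem_transfer {Γ Δ : Set (Formula P Q)}
    (hΓ : MCS (AxExt P Q) Γ) (hΔ : MCS (AxExt P Q) Δ)
    (hsub : {ψ : Formula P Q | Formula.K ψ ∈ Γ} ⊆ Δ) {χ : Formula P Q}
    (h4 : Prov (AxExt P Q) (χ.imp (Formula.K χ)))
    (h5 : Prov (AxExt P Q) ((Formula.not χ).imp (Formula.K (Formula.not χ)))) :
    χ ∈ Γ ↔ χ ∈ Δ := by
  constructor
  · intro h; exact hsub (mcs_mem_imp hΓ h4 h)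
  · intro h
    by_contra hc
    have h1 : Formula.not χ ∈ Γ := (mcs_not_iff hΓ).2 hc
    have h2 : Formula.not χ ∈ Δ := hsub (mcs_mem_imp hΓ h5 h1)
    exact (mcs_not_iff hΔ).1 h2 h

private lemma tupleV_eq_iff {G : Type} (v v' : Q → G) (C : Finset Q) :
    tupleV v C = tupleV v' C ↔ ∀ c ∈ C, v c = v' c := by
  constructor
  · intro h c hc
    have hmem : c ∈ C.sort (· ≤ ·) := (Finset.mem_sort _).2 hc
    obtain ⟨k, hk⟩ := List.get_of_mem hmem
    have h1 := congrFun h (Fin.cast (Finset.length_sort (· ≤ ·)) k)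
    have h2 : v ((C.sort (· ≤ ·)).get k) = v' ((C.sort (· ≤ ·)).get k) := h1
    rw [hk] at h2
    exact h2
  · intro h
    funext k
    simp only [tupleV]
    exact h _ ((Finset.mem_sort _).1 (List.get_mem _ _))

private lemma mcs_proj {Γ : Set (Formula P Q)} (hΓ : MCS (AxExt P Q) Γ)
    {C : Finset Q} {c : Q} (h : c ∈ C) : Formula.Kf C c ∈ Γ :=
  mcs_mem_of_prov hΓ (Prov.ax (Or.inl (SLKVF.proj h)))

private lemma mcs_finConjKf_iff {Γ : Set (Formula P Q)} (hΓ : MCS (AxExt P Q) Γ)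
    {C D : Finset Q} :
    finConjKf P Q C D ∈ Γ ↔ ∀ d ∈ D, Formula.Kf C d ∈ Γ := by
  rw [finConjKf, mcs_conj_iff hΓ]
  constructor
  · intro h d hd
    exact h _ (List.mem_map.2 ⟨d, (Finset.mem_sort _).2 hd, rfl⟩)
  · rintro h φ hφ
    obtain ⟨d, hd, rfl⟩ := List.mem_map.1 hφ
    exact h d ((Finset.mem_sort _).1 hd)

private lemma mcs_finConjKv_iff {Γ : Set (Formula P Q)} (hΓ : MCS (AxExt P Q) Γ)
    {C : Finset Q} :
    finConjKv P Q C ∈ Γ ↔ ∀ c ∈ C, Formula.Kv c ∈ Γ := by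
  rw [finConjKv, mcs_conj_iff hΓ]
  constructor
  · intro h c hc
    exact h _ (List.mem_map.2 ⟨c, (Finset.mem_sort _).2 hc, rfl⟩)
  · rintro h φ hφ
    obtain ⟨c, hc, rfl⟩ := List.mem_map.1 hφ
    exact h c ((Finset.mem_sort _).1 hc)

private lemma mcs_tran {Γ : Set (Formula P Q)} (hΓ : MCS (AxExt P Q) Γ)
    {C D : Finset Q} {d : Q} (h1 : ∀ c ∈ C, Formula.Kf D c ∈ Γ)
    (h2 : Formula.Kf C d ∈ Γ) : Formula.Kf D d ∈ Γ := by
  have hax : Prov (AxExt P Q) (Formula.imp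
      (Formula.and (finConjKf P Q D C) (Formula.Kf C d)) (Formula.Kf D d)) :=
    Prov.ax (Or.inl (SLKVF.tran D C d))
  exact mcs_mem_imp hΓ hax
    ((mcs_and_iff hΓ).2 ⟨(mcs_finConjKf_iff hΓ).2 h1, h2⟩)

private lemma mcs_vf {Γ : Set (Formula P Q)} (hΓ : MCS (AxExt P Q) Γ)
    {C : Finset Q} {d : Q} (h1 : ∀ c ∈ C, Formula.Kv c ∈ Γ)
    (h2 : Formula.Kf C d ∈ Γ) : Formula.Kv d ∈ Γ := by
  have hax : Prov (AxExt P Q) (Formula.imp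
      (Formula.and (finConjKv P Q C) (Formula.Kf C d)) (Formula.Kv d)) :=
    Prov.ax (Or.inl (SLKVF.vf C d))
  exact mcs_mem_imp hΓ hax
    ((mcs_and_iff hΓ).2 ⟨(mcs_finConjKv_iff hΓ).2 h1, h2⟩)

private lemma mcs_ext {Γ : Set (Formula P Q)} (hΓ : MCS (AxExt P Q) Γ)
    {C : Finset Q} {d : Q} (h : Formula.Kv d ∈ Γ) : Formula.Kf C d ∈ Γ :=
  mcs_mem_imp hΓ (Prov.ax (Or.inr ⟨d, C, rfl⟩)) h

private lemma mcs_kf_empty {Γ : Set (Formula P Q)} (hΓ : MCS (AxExt P Q) Γ)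
    {d : Q} (h : Formula.Kf (∅ : Finset Q) d ∈ Γ) : Formula.Kv d ∈ Γ :=
  mcs_vf hΓ (by simp) h

end Infra3

section Infra4

variable {P Q G : Type} [LinearOrder Q]

private lemma vp_eq {Γ : Set (Formula P Q)} {g : Set Q → Bool → G} {X : Set Q}
    {i : Bool} {c : Q} (hc : Formula.Kv c ∉ Γ) :
    Vp Γ g X i c = g X (if c ∈ X then false else i) := by
  simp only [Vp, if_neg hc]
  split_ifs <;> rfl

private lemma vp_det {Γ : Set (Formula P Q)} (hΓ : MCS (AxExt P Q) Γ)
    {g : Set Q → Bool → G}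
    (hg : ∀ X ∈ MGamma Γ, ∀ X' ∈ MGamma Γ, ∀ i i' : Bool,
      g X i = g X' i' → X = X' ∧ i = i')
    {C : Finset Q} {d : Q} (hKf : Formula.Kf C d ∈ Γ)
    {X X' : Set Q} (hX : X ∈ MGamma Γ) (hX' : X' ∈ MGamma Γ) {i i' : Bool}
    (h : ∀ c ∈ C, Vp Γ g X i c = Vp Γ g X' i' c) :
    Vp Γ g X i d = Vp Γ g X' i' d := by
  by_cases hKv : Formula.Kv d ∈ Γ
  · simp [Vp, hKv]
  have hc0 : ∃ c ∈ C, Formula.Kv c ∉ Γ := by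
    by_contra hall
    push_neg at hall
    exact hKv (mcs_vf hΓ hall hKf)
  obtain ⟨c₀, hc₀C, hc₀⟩ := hc0
  have hXX' : X = X' := by
    have h0 := h c₀ hc₀C
    rw [vp_eq hc₀, vp_eq hc₀] at h0
    exact (hg X hX X' hX' _ _ h0).1
  subst hXX'
  by_cases hdX : d ∈ X
  · simp [Vp, hKv, hdX]
  obtain ⟨D, rfl⟩ := hX
  have hc1 : ∃ c ∈ C, c ∉ plusSet Γ D ∧ Formula.Kv c ∉ Γ := by
    by_contra hall
    push_neg at hall
    apply hdX
    refine mcs_tran hΓ (fun c hc => ?_) hKf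
    by_cases hcX : c ∈ plusSet Γ D
    · exact hcX
    · exact mcs_ext hΓ (hall c hc hcX)
  obtain ⟨c₁, hc₁C, hc₁X, hc₁Kv⟩ := hc1
  have h1 := h c₁ hc₁C
  rw [vp_eq hc₁Kv, vp_eq hc₁Kv, if_neg hc₁X, if_neg hc₁X] at h1
  have hii : i = i' := (hg _ ⟨D, rfl⟩ _ ⟨D, rfl⟩ _ _ h1).2
  subst hii
  rfl

private noncomputable def fCan (Γ : Set (Formula P Q)) (g : Set Q → Bool → G)
    (C : Finset Q) (d : Q) : (Fin C.card → G) → G := fun t =>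
  if hex : ∃ w : {X : Set Q // X ∈ MGamma Γ} × Bool,
      tupleV (fun c => Vp Γ g w.1.1 w.2 c) C = t
  then Vp Γ g hex.choose.1.1 hex.choose.2 d
  else g (plusSet Γ (∅ : Finset Q)) false

end Infra4

theorem statement6 (P Q G : Type) [Countable P] [Infinite P] [LinearOrder Q]
    (hcard : Nonempty ((Finset Q × Bool) ↪ G))
    (Γ : Set (Formula P Q)) (hΓ : MCS (AxExt P Q) Γ)
    (g : Set Q → Bool → G)
    (hg : ∀ X ∈ MGamma Γ, ∀ X' ∈ MGamma Γ, ∀ i i' : Bool,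
      g X i = g X' i' → X = X' ∧ i = i') :
    ∀ (Δ : LWorlds P Q Γ) (X : {X : Set Q // X ∈ MGamma Γ}) (i : Bool)
      (φ : Formula P Q),
      φ ∈ Δ.1 ↔ sat (Set.univ : FnDom G) (canonModel P Q G Γ g) ⟨Δ, X, i⟩ φ := by
  intro Δ X i φ
  induction φ generalizing Δ X i with
  | top =>
    simp only [sat, iff_true]
    exact mcs_mem_of_prov Δ.2.1 (pt fun v hT hA hN => hT)
  | atom p => exact Iff.rfl
  | Kv d =>
    have htrans : Formula.Kv d ∈ Γ ↔ Formula.Kv d ∈ Δ.1 :=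
      mem_transfer hΓ Δ.2.1 Δ.2.2 (Prov.ax (Or.inl (SLKVF.kv4 d)))
        (Prov.ax (Or.inl (SLKVF.kv5 d)))
    simp only [sat]
    constructor
    · intro h
      have hΓKv : Formula.Kv d ∈ Γ := htrans.2 h
      exact ⟨g (plusSet Γ (∅ : Finset Q)) false, fun w' => by
        simp [canonModel, Vp, hΓKv]⟩
    · rintro ⟨x, hx⟩
      by_contra hc
      have hΓKv : Formula.Kv d ∉ Γ := fun h' => hc (htrans.1 h')
      have hd0 : d ∉ plusSet Γ (∅ : Finset Q) := fun h' => hΓKv (mcs_kf_empty hΓ h')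
      have h1 := hx ⟨Δ, ⟨plusSet Γ (∅ : Finset Q), ⟨∅, rfl⟩⟩, false⟩
      have h2 := hx ⟨Δ, ⟨plusSet Γ (∅ : Finset Q), ⟨∅, rfl⟩⟩, true⟩
      have heq : g (plusSet Γ (∅ : Finset Q)) false = g (plusSet Γ (∅ : Finset Q)) true := by
        have e1 : (canonModel P Q G Γ g).V ⟨Δ, ⟨plusSet Γ (∅ : Finset Q), ⟨∅, rfl⟩⟩, false⟩ d
            = g (plusSet Γ (∅ : Finset Q)) false := by
          show Vp Γ g _ _ d = _
          rw [vp_eq hΓKv, if_neg hd0]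
        have e2 : (canonModel P Q G Γ g).V ⟨Δ, ⟨plusSet Γ (∅ : Finset Q), ⟨∅, rfl⟩⟩, true⟩ d
            = g (plusSet Γ (∅ : Finset Q)) true := by
          show Vp Γ g _ _ d = _
          rw [vp_eq hΓKv, if_neg hd0]
        rw [← e1, ← e2, h1, h2]
      exact Bool.false_ne_true (hg _ ⟨∅, rfl⟩ _ ⟨∅, rfl⟩ _ _ heq).2
  | Kf C d =>
    have htrans : Formula.Kf C d ∈ Γ ↔ Formula.Kf C d ∈ Δ.1 :=
      mem_transfer hΓ Δ.2.1 Δ.2.2 (Prov.ax (Or.inl (SLKVF.kf4 C d)))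
        (Prov.ax (Or.inl (SLKVF.kf5 C d)))
    simp only [sat]
    constructor
    · intro h
      have hΓKf : Formula.Kf C d ∈ Γ := htrans.2 h
      refine ⟨fCan Γ g C d, Set.mem_univ _, ?_⟩
      intro w'
      have hex : ∃ w : {X : Set Q // X ∈ MGamma Γ} × Bool,
          tupleV (fun c => Vp Γ g w.1.1 w.2 c) C
            = tupleV ((canonModel P Q G Γ g).V w') C := ⟨⟨w'.2.1, w'.2.2⟩, rfl⟩
      show Vp Γ g w'.2.1.1 w'.2.2 d = fCan Γ g C d (tupleV ((canonModel P Q G Γ g).V w') C)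
      rw [fCan, dif_pos hex]
      have hpt : ∀ c ∈ C, Vp Γ g hex.choose.1.1 hex.choose.2 c
          = Vp Γ g w'.2.1.1 w'.2.2 c :=
        (tupleV_eq_iff _ _ C).1 hex.choose_spec
      exact (vp_det hΓ hg hΓKf hex.choose.1.2 w'.2.1.2 hpt).symm
    · rintro ⟨f, -, hf⟩
      refine htrans.1 ?_
      by_contra hc
      have hKv : Formula.Kv d ∉ Γ := fun h' => hc (mcs_ext hΓ h')
      have hdC : d ∉ plusSet Γ C := hc
      have hCmem : plusSet Γ C ∈ MGamma Γ := ⟨C, rfl⟩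
      have h1 := hf ⟨Δ, ⟨plusSet Γ C, hCmem⟩, false⟩
      have h2 := hf ⟨Δ, ⟨plusSet Γ C, hCmem⟩, true⟩
      have htup : tupleV ((canonModel P Q G Γ g).V ⟨Δ, ⟨plusSet Γ C, hCmem⟩, false⟩) C
          = tupleV ((canonModel P Q G Γ g).V ⟨Δ, ⟨plusSet Γ C, hCmem⟩, true⟩) C := by
        rw [tupleV_eq_iff]
        intro c hcC
        have hcp : c ∈ plusSet Γ C := mcs_proj hΓ hcC
        show Vp Γ g _ _ c = Vp Γ g _ _ c
        by_cases hKvc : Formula.Kv c ∈ Γ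
        · simp [Vp, hKvc]
        · rw [vp_eq hKvc, vp_eq hKvc, if_pos hcp, if_pos hcp]
      rw [htup] at h1
      have heq : (canonModel P Q G Γ g).V ⟨Δ, ⟨plusSet Γ C, hCmem⟩, false⟩ d
          = (canonModel P Q G Γ g).V ⟨Δ, ⟨plusSet Γ C, hCmem⟩, true⟩ d := h1.trans h2.symm
      have heq' : g (plusSet Γ C) false = g (plusSet Γ C) true := by
        have e1 : (canonModel P Q G Γ g).V ⟨Δ, ⟨plusSet Γ C, hCmem⟩, false⟩ d
            = g (plusSet Γ C) false := by
          show Vp Γ g _ _ d = _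
          rw [vp_eq hKv, if_neg hdC]
        have e2 : (canonModel P Q G Γ g).V ⟨Δ, ⟨plusSet Γ C, hCmem⟩, true⟩ d
            = g (plusSet Γ C) true := by
          show Vp Γ g _ _ d = _
          rw [vp_eq hKv, if_neg hdC]
        rw [← e1, ← e2, heq]
      exact Bool.false_ne_true (hg _ hCmem _ hCmem _ _ heq').2
  | and φ ψ ihφ ihψ =>
    rw [mcs_and_iff Δ.2.1]
    simp only [sat]
    rw [ihφ Δ X i, ihψ Δ X i]
  | not φ ih =>
    rw [mcs_not_iff Δ.2.1]
    simp only [sat]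
    rw [ih Δ X i]
  | K φ ih =>
    have htrans : Formula.K φ ∈ Γ ↔ Formula.K φ ∈ Δ.1 :=
      mem_transfer hΓ Δ.2.1 Δ.2.2 (Prov.ax (Or.inl (SLKVF.ax4 φ)))
        (Prov.ax (Or.inl (SLKVF.ax5 φ)))
    simp only [sat]
    constructor
    · intro h w'
      have hΓK : Formula.K φ ∈ Γ := htrans.2 h
      have hmem : φ ∈ w'.1.1 := w'.1.2.2 hΓK
      exact (ih w'.1 w'.2.1 w'.2.2).1 hmem
    · intro h
      refine htrans.1 ?_
      by_contra hc
      obtain ⟨Δ', hΔ', hsub'⟩ := lindenbaum (cons_GammaK_not hΓ hc)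
      have hsubK : {ψ : Formula P Q | Formula.K ψ ∈ Γ} ⊆ Δ' := fun ψ hψ =>
        hsub' (Set.mem_union_left _ hψ)
      have hnotφ : Formula.not φ ∈ Δ' := hsub' (Set.mem_union_right _ rfl)
      have hw := h ⟨⟨Δ', hΔ', hsubK⟩, X, i⟩
      rw [← ih ⟨Δ', hΔ', hsubK⟩ X i] at hw
      exact (mcs_not_iff hΔ').1 hnotφ hw
end

section
/- Let G = 2^{P_f(Q)}, F = ⋃_n Lmax_n, and let Γ be a maximal consistent set in SLKVF. Let M_Γ = {C^{+Γ} : C finite ⊆ Q} ∪ {Γ_Kv}, where C^{+Γ} = {d : Kf(C,d) ∈ Γ} and Γ_Kv = {d : Kv(d) ∈ Γ}, and let g : P_f(Q) → M_Γ be any surjection. Define V_0, V_1 : Q → G by V_0(d)[C] = 0 if d ∈ g(C) and 1 otherwise, and V_1(d)[C] = V_0(d)[C] if g(C) ≠ Γ_Kv and V_1(d)[C] = 0 if g(C) = Γ_Kv. Then for all finite C ⊆ Q and d ∈ Q: if Kf(C,d) ∈ Γ, there exists f ∈ F with f(V_0(C)) = V_0(d) and f(V_1(C)) = V_1(d); and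 if Kf(C,d) ∉ Γ, then for all f ∈ F, f(V_0(C)) ≠ V_0(d). -/
open scoped Classical

variable {P Q G : Type}

variable [LinearOrder Q]

/-! STATEMENT 12: the `Kf` clauses for the valuations `V₀`, `V₁` built from a
maximal consistent set in `SLKVF`, over the intermediate function domain. -/

/-- The intermediate function domain `⋃ₙ Lmax_n` on `G = 2^{P_f(Q)}`. -/
def FLmax (Q : Type) : FnDom (Finset Q → Bool) :=
  {p : Σ n : ℕ, (Fin n → Finset Q → Bool) → Finset Q → Bool |
    ∀ (x : Fin p.1 → Finset Q → Bool) (C : Finset Q),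
      p.2 x C = true → ∃ k : Fin p.1, x k C = true}

/-- `Γ_Kv = {d : Kv(d) ∈ Γ}`. -/
def GKv {P Q : Type} (Γ : Set (Formula P Q)) : Set Q := {d : Q | Formula.Kv d ∈ Γ}

/-- `M_Γ = {C^{+Γ} : C finite ⊆ Q} ∪ {Γ_Kv}`. -/
def MGammaInt {P Q : Type} (Γ : Set (Formula P Q)) : Set (Set Q) :=
  {X : Set Q | ∃ C : Finset Q, X = plusSet Γ C} ∪ {GKv Γ}

/-- `V₀(d)[C] = 0` if `d ∈ g(C)`, else `1`. -/
noncomputable def V0 {P Q : Type} (Γ : Set (Formula P Q)) (g : Finset Q → Set Q)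
    (d : Q) : Finset Q → Bool :=
  fun C => if d ∈ g C then false else true

/-- `V₁(d)[C] = V₀(d)[C]` unless `g(C) = Γ_Kv`, in which case it is `0`. -/
noncomputable def V1 {P Q : Type} (Γ : Set (Formula P Q)) (g : Finset Q → Set Q)
    (d : Q) : Finset Q → Bool :=
  fun C => if g C = GKv Γ then false else V0 Γ g d C

section MCSHelpers

variable {P Q : Type} [LinearOrder Q] {Γ : Set (Formula P Q)}

lemma provTaut {φ : Formula P Q} (h : IsTaut φ) : Prov (SLKVF P Q) φ :=
  Prov.ax (SLKVF.taut h)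

lemma mcs_mp_mem (hΓ : MCS (SLKVF P Q) Γ) {φ ψ : Formula P Q}
    (himp : Formula.imp φ ψ ∈ Γ) (hφ : φ ∈ Γ) : ψ ∈ Γ := by
  by_contra hn
  have hnψ : Formula.not ψ ∈ Γ := (hΓ.2 ψ).resolve_left hn
  apply hΓ.1
  refine ⟨[Formula.imp φ ψ, φ, Formula.not ψ], ?_, provTaut ?_⟩
  · intro χ hχ
    simp only [List.mem_cons, List.mem_singleton, List.not_mem_nil] at hχ
    rcases hχ with rfl | rfl | rfl | h; exacts [himp, hφ, hnψ, absurd h (by simp)]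
  · intro v h1 h2 h3
    simp only [conj, Formula.imp, Formula.bot, h2, h3, h1]
    cases v φ <;> cases v ψ <;> rfl

lemma mcs_thm (hΓ : MCS (SLKVF P Q) Γ) {φ : Formula P Q}
    (h : Prov (SLKVF P Q) φ) : φ ∈ Γ := by
  by_contra hn
  have hnφ : Formula.not φ ∈ Γ := (hΓ.2 φ).resolve_left hn
  apply hΓ.1
  refine ⟨[Formula.not φ], by simpa using hnφ, ?_⟩
  refine Prov.mp (provTaut ?_) h
  intro v h1 h2 h3
  simp only [conj, Formula.imp, Formula.bot, h2, h3, h1]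
  cases v φ <;> rfl

lemma mcs_top (hΓ : MCS (SLKVF P Q) Γ) : (Formula.top : Formula P Q) ∈ Γ :=
  mcs_thm hΓ (provTaut fun _ h1 _ _ => h1)

lemma mcs_and (hΓ : MCS (SLKVF P Q) Γ) {φ ψ : Formula P Q}
    (hφ : φ ∈ Γ) (hψ : ψ ∈ Γ) : Formula.and φ ψ ∈ Γ := by
  have h1 : Formula.imp φ (Formula.imp ψ (Formula.and φ ψ)) ∈ Γ := by
    refine mcs_thm hΓ (provTaut ?_)
    intro v h1 h2 h3
    simp only [Formula.imp, h2, h3, h1]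
    cases v φ <;> cases v ψ <;> rfl
  exact mcs_mp_mem hΓ (mcs_mp_mem hΓ h1 hφ) hψ

lemma mcs_conj (hΓ : MCS (SLKVF P Q) Γ) :
    ∀ L : List (Formula P Q), (∀ φ ∈ L, φ ∈ Γ) → conj L ∈ Γ
  | [], _ => mcs_top hΓ
  | φ :: l, h =>
      mcs_and hΓ (h φ List.mem_cons_self)
        (mcs_conj hΓ l fun ψ hψ => h ψ (List.mem_cons_of_mem _ hψ))

/-- Key closure lemma: if `Kf(C,d) ∈ Γ` and every `c ∈ C` lies in `g B`,
then `d ∈ g B`, where `g B ∈ M_Γ`. -/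
lemma key_closure (hΓ : MCS (SLKVF P Q) Γ) {g : Finset Q → Set Q}
    (hg1 : ∀ C : Finset Q, g C ∈ MGammaInt Γ) {C : Finset Q} {d : Q}
    (hKf : Formula.Kf C d ∈ Γ) {B : Finset Q} (hall : ∀ c ∈ C, c ∈ g B) :
    d ∈ g B := by
  rcases hg1 B with ⟨D, hD⟩ | hD
  · -- g B = plusSet Γ D
    rw [hD] at hall ⊢
    have hconj : finConjKf P Q D C ∈ Γ := by
      refine mcs_conj hΓ _ ?_
      intro φ hφ
      simp only [List.mem_map] at hφ
      rcases hφ with ⟨c, hc, rfl⟩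
      exact hall c (Finset.mem_sort (α := Q) (· ≤ ·) |>.mp hc)
    have := mcs_mp_mem hΓ (mcs_thm hΓ (Prov.ax (SLKVF.tran D C d)))
      (mcs_and hΓ hconj hKf)
    exact this
  · -- g B = GKv Γ
    simp only [Set.mem_singleton_iff] at hD
    rw [hD] at hall ⊢
    have hconj : finConjKv P Q C ∈ Γ := by
      refine mcs_conj hΓ _ ?_
      intro φ hφ
      simp only [List.mem_map] at hφ
      rcases hφ with ⟨c, hc, rfl⟩
      exact hall c (Finset.mem_sort (α := Q) (· ≤ ·) |>.mp hc)
    exact mcs_mp_mem hΓ (mcs_thm hΓ (Prov.ax (SLKVF.vf C d)))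
      (mcs_and hΓ hconj hKf)

end MCSHelpers

theorem statement12 (P Q : Type) [Countable P] [Infinite P] [LinearOrder Q]
    (Γ : Set (Formula P Q)) (hΓ : MCS (SLKVF P Q) Γ)
    (g : Finset Q → Set Q)
    (hg1 : ∀ C : Finset Q, g C ∈ MGammaInt Γ)
    (hg2 : ∀ X ∈ MGammaInt Γ, ∃ C : Finset Q, g C = X) :
    ∀ (C : Finset Q) (d : Q),
      (Formula.Kf C d ∈ Γ →
        ∃ f : (Fin C.card → Finset Q → Bool) → Finset Q → Bool,
          (⟨C.card, f⟩ : Σ n : ℕ, (Fin n → Finset Q → Bool) → Finset Q → Bool) ∈ FLmax Q ∧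
          f (tupleV (V0 Γ g) C) = V0 Γ g d ∧ f (tupleV (V1 Γ g) C) = V1 Γ g d) ∧
      (Formula.Kf C d ∉ Γ →
        ∀ f : (Fin C.card → Finset Q → Bool) → Finset Q → Bool,
          (⟨C.card, f⟩ : Σ n : ℕ, (Fin n → Finset Q → Bool) → Finset Q → Bool) ∈ FLmax Q →
            f (tupleV (V0 Γ g) C) ≠ V0 Γ g d) := by
  intro C d
  constructor
  · -- Kf(C,d) ∈ Γ : witness function
    intro hKf
    refine ⟨fun x B => V0 Γ g d B && decide (∃ k, x k B = true), ?_, ?_, ?_⟩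
    · -- membership in FLmax
      intro x B h
      simp only [Bool.and_eq_true, decide_eq_true_eq] at h
      exact h.2
    · -- value on V0
      funext B
      by_cases hd : d ∈ g B
      · simp [V0, hd]
      · have hV : V0 Γ g d B = true := by simp [V0, hd]
        simp only [hV, Bool.true_and]
        simp only [decide_eq_true_eq]
        have hnc : ¬ ∀ c ∈ C, c ∈ g B := fun h => hd (key_closure hΓ hg1 hKf h)
        push_neg at hnc
        obtain ⟨c, hc, hcB⟩ := hnc
        have hcs : c ∈ C.sort (· ≤ ·) := (Finset.mem_sort _).mpr hc
        obtain ⟨i, hi⟩ := List.mem_iff_get.mp hcs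
        refine ⟨Fin.cast (Finset.length_sort (· ≤ ·)) i, ?_⟩
        have he : tupleV (V0 Γ g) C (Fin.cast (Finset.length_sort (· ≤ ·)) i)
            = V0 Γ g c := by
          unfold tupleV
          congr 1
        rw [he]
        simp [V0, hcB]
    · -- value on V1
      funext B
      by_cases hB : g B = GKv Γ
      · have hz : ∀ k : Fin C.card, tupleV (V1 Γ g) C k B = false := by
          intro k
          unfold tupleV V1
          simp [hB]
        simp only [hz, V1, hB, if_pos]
        simp
      · have ht : ∀ k : Fin C.card, tupleV (V1 Γ g) C k B = tupleV (V0 Γ g) C k B := by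
          intro k
          unfold tupleV V1
          simp [hB]
        simp only [ht, V1, hB, if_neg, ite_false]
        -- now identical to the V0 case at B
        by_cases hd : d ∈ g B
        · simp [V0, hd]
        · have hV : V0 Γ g d B = true := by simp [V0, hd]
          simp only [hV, Bool.true_and]
          simp only [decide_eq_true_eq]
          have hnc : ¬ ∀ c ∈ C, c ∈ g B := fun h => hd (key_closure hΓ hg1 hKf h)
          push_neg at hnc
          obtain ⟨c, hc, hcB⟩ := hnc
          have hcs : c ∈ C.sort (· ≤ ·) := (Finset.mem_sort _).mpr hc
          obtain ⟨i, hi⟩ := List.mem_iff_get.mp hcs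
          refine ⟨Fin.cast (Finset.length_sort (· ≤ ·)) i, ?_⟩
          have he : tupleV (V0 Γ g) C (Fin.cast (Finset.length_sort (· ≤ ·)) i)
              = V0 Γ g c := by
            unfold tupleV
            congr 1
          rw [he]
          simp [V0, hcB]
  · -- Kf(C,d) ∉ Γ : no function works
    intro hnot f hf hEq
    obtain ⟨B, hB⟩ := hg2 (plusSet Γ C) (by left; exact ⟨C, rfl⟩)
    have hdB : d ∉ g B := by rw [hB]; exact hnot
    have h2 : f (tupleV (V0 Γ g) C) B = true := by
      rw [hEq]; simp [V0, hdB]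
    obtain ⟨k, hk⟩ := hf (tupleV (V0 Γ g) C) B h2
    set c := (C.sort (· ≤ ·)).get
      (Fin.cast (Finset.length_sort (s := C) (· ≤ ·)).symm k) with hc
    have hcC : c ∈ C := (Finset.mem_sort _).mp (List.get_mem _ _)
    have hcg : c ∈ g B := by
      rw [hB]; exact mcs_thm hΓ (Prov.ax (SLKVF.proj hcC))
    have hfalse : V0 Γ g c B = false := by simp [V0, hcg]
    have : tupleV (V0 Γ g) C k = V0 Γ g c := rfl
    rw [this, hfalse] at hk
    exact Bool.false_ne_true hk
end
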